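/- For each k, σ² Σ 1/σ_k² ≥ σ² σ_k²/(σ_k²+b²)² + (b²/(σ_k²+b²))² (v_k'β)² holds term-by-term whenever σ²(1/σ_k² + 2/b²) ≥ (v_k'β)², for σ_k, b > 0. More precisely: 1/σ_k² − σ_k²/(σ_k²+b²)² = (2σ_k²b² + b⁴)/(σ_k²(σ_k²+b²)²), and (2σ_k²b²+b⁴)/(σ_k²(σ_k²+b²)²) · σ² > (b²/(σ_k²+b²))²(v_k'β)² whenever σ²(1/σ_k² + 2/b²) > (v_k'β)². -/

import Mathlib

/-- The key scalar inequality underlying Proposition 2: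
for σ_k, b > 0 and σ² ≥ 0, c = v_k'β, we have
1/σ_k² − σ_k²/(σ_k²+b²)² = (2σ_k²b² + b⁴)/(σ_k²(σ_k²+b²)²), and
(2σ_k²b²+b⁴)/(σ_k²(σ_k²+b²)²)·σ² > (b²/(σ_k²+b²))²·c²
whenever σ²(1/σ_k² + 2/b²) > c². -/
theorem stmt_16 (s b v c : ℝ) (hs : 0 < s) (hb : 0 < b) (hv : 0 ≤ v) :
    (1 / s ^ 2 - s ^ 2 / (s ^ 2 + b ^ 2) ^ 2
        = (2 * s ^ 2 * b ^ 2 + b ^ 4) / (s ^ 2 * (s ^ 2 + b ^ 2) ^ 2)) ∧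
    (v * (1 / s ^ 2 + 2 / b ^ 2) > c ^ 2 →
      (2 * s ^ 2 * b ^ 2 + b ^ 4) / (s ^ 2 * (s ^ 2 + b ^ 2) ^ 2) * v
        > (b ^ 2 / (s ^ 2 + b ^ 2)) ^ 2 * c ^ 2) := by
  have hs2 : (0:ℝ) < s ^ 2 := by positivity
  have hb2 : (0:ℝ) < b ^ 2 := by positivity
  have hsb : (0:ℝ) < s ^ 2 + b ^ 2 := by positivity
  constructor
  · field_simp
    ring
  · intro h
    have h' : c ^ 2 * (s ^ 2 * b ^ 2) < v * (b ^ 2 + 2 * s ^ 2) := by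
      have h2 := (mul_lt_mul_iff_left₀ (by positivity : (0:ℝ) < s ^ 2 * b ^ 2)).mpr h
      calc c ^ 2 * (s ^ 2 * b ^ 2) < v * (1 / s ^ 2 + 2 / b ^ 2) * (s ^ 2 * b ^ 2) := h2
        _ = v * (b ^ 2 + 2 * s ^ 2) := by field_simp
    rw [gt_iff_lt, div_pow, div_mul_eq_mul_div, div_mul_eq_mul_div, div_lt_div_iff₀ (by positivity) (by positivity)]
    nlinarith [mul_lt_mul_of_pos_right h' (show (0:ℝ) < b ^ 2 * (s ^ 2 + b ^ 2) ^ 2 by positivity)]
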